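/- arXiv:2602.02855 — 2 statements merged into one kernel-verified Lean document; each statement's English description precedes it below -/
import Mathlib

section
/- Let k ≥ 3 be an integer and let τ : (0,1) → ℝ be the characteristic escape-time prefactor defined in the context (assumed well defined, i.e. A(μ) ≠ 0, for μ close to 1). Then lim_{μ→1⁻} (μ² − 1)² · τ(μ) = 4/(2k − 1)². -/
open Finset in
/-- The auxiliary function `f(k,μ)` appearing in the drift coefficients of the
linearized LoRA search-phase dynamics for a pure Hermite activation `He_k`. -/
noncomputable def fAux (k : ℕ) (μ : ℝ) : ℝ :=
  ∑ m ∈ Finset.Icc 1 (k / 2),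
    (1 + (k : ℝ) * (μ ^ 2 - 1) / (2 * (m : ℝ))) * μ ^ (2 * (k - 2 * m)) *
      (μ ^ 2 - 1) ^ (2 * m - 1) /
      (((k - 2 * m).factorial : ℝ) * (m.factorial : ℝ) * ((m - 1).factorial : ℝ) *
        (2 : ℝ) ^ (2 * m - 1))

/-- The rescaled drift coefficient `A(μ)` of the linearized dynamics. -/
noncomputable def Acoef (k : ℕ) (μ : ℝ) : ℝ :=
  -(μ ^ (k - 1) * (μ ^ k - 1) + ((k.factorial : ℝ) / (k : ℝ)) * μ⁻¹ * fAux k μ)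

/-- The rescaled drift coefficient `B(μ)` of the linearized dynamics. -/
noncomputable def Bcoef (k : ℕ) (μ : ℝ) : ℝ :=
  -(μ ^ (2 * k - 2) + ((k.factorial : ℝ) / (k : ℝ)) * (μ ^ 2)⁻¹ * fAux k μ)

/-- The characteristic escape-time prefactor `τ(μ)`. -/
noncomputable def tauCoef (k : ℕ) (μ : ℝ) : ℝ :=
  (-(Bcoef k μ) + Real.sqrt ((Bcoef k μ) ^ 2 + 4 * (Acoef k μ) ^ 2)) /
    (2 * (Acoef k μ) ^ 2)

/-- Auxiliary: `f(k,μ)` with one factor `(μ²−1)` pulled out. -/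
noncomputable def gAux (k : ℕ) (μ : ℝ) : ℝ :=
  ∑ m ∈ Finset.Icc 1 (k / 2),
    (1 + (k : ℝ) * (μ ^ 2 - 1) / (2 * (m : ℝ))) * μ ^ (2 * (k - 2 * m)) *
      (μ ^ 2 - 1) ^ (2 * (m - 1)) /
      (((k - 2 * m).factorial : ℝ) * (m.factorial : ℝ) * ((m - 1).factorial : ℝ) *
        (2 : ℝ) ^ (2 * m - 1))

lemma fAux_eq (k : ℕ) (μ : ℝ) : fAux k μ = (μ ^ 2 - 1) * gAux k μ := by
  unfold fAux gAux
  rw [Finset.mul_sum]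
  refine Finset.sum_congr rfl fun m hm => ?_
  have hm1 : 1 ≤ m := (Finset.mem_Icc.mp hm).1
  have h : 2 * m - 1 = 2 * (m - 1) + 1 := by omega
  rw [h, pow_succ]
  ring

lemma gAux_cont (k : ℕ) : Continuous (gAux k) := by
  unfold gAux
  refine continuous_finset_sum _ fun m _ => Continuous.div_const ?_ _
  fun_prop

lemma fAux_cont (k : ℕ) : Continuous (fAux k) := by
  simp only [funext (fAux_eq k)]
  exact (by fun_prop : Continuous fun μ:ℝ => μ^2-1).mul (gAux_cont k)

lemma fAux_one (k : ℕ) : fAux k 1 = 0 := by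
  rw [fAux_eq]; norm_num

lemma gAux_one (k : ℕ) (hk : 3 ≤ k) :
    gAux k 1 = 1 / (2 * ((k - 2).factorial : ℝ)) := by
  unfold gAux
  rw [Finset.sum_eq_single 1]
  · norm_num; ring
  · intro m hm hne
    have hm1 : 2 ≤ m := by
      rcases Finset.mem_Icc.mp hm with ⟨h1, _⟩; omega
    have : (1:ℝ) ^ 2 - 1 = 0 := by norm_num
    rw [this, zero_pow (by omega)]
    ring
  · intro h
    exact absurd (Finset.mem_Icc.mpr ⟨le_refl 1, by omega⟩) h

/-- The slope factor: `A(μ) = (μ²−1)·qAux(μ)` away from `μ = −1`. -/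
noncomputable def qAux (k : ℕ) (μ : ℝ) : ℝ :=
  -(μ ^ (k - 1) * (∑ i ∈ Finset.range k, μ ^ i) / (μ + 1) +
    ((k.factorial : ℝ) / (k : ℝ)) * μ⁻¹ * gAux k μ)

lemma Acoef_factor (k : ℕ) (μ : ℝ) (h : μ + 1 ≠ 0) :
    Acoef k μ = (μ ^ 2 - 1) * qAux k μ := by
  unfold Acoef qAux
  rw [fAux_eq]
  have hg := geom_sum_mul μ k
  have h1 : (μ ^ 2 - 1) * (μ ^ (k - 1) * (∑ i ∈ Finset.range k, μ ^ i) / (μ + 1))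
      = μ ^ (k - 1) * (μ ^ k - 1) := by
    rw [← hg]
    field_simp
    ring
  rw [neg_eq_iff_eq_neg, mul_neg, neg_neg, mul_add, h1]
  ring

lemma qAux_contAt (k : ℕ) : ContinuousAt (qAux k) 1 := by
  unfold qAux
  refine ContinuousAt.neg (ContinuousAt.add (ContinuousAt.div ?_ ?_ (by norm_num)) ?_)
  · fun_prop
  · fun_prop
  · exact ContinuousAt.mul (ContinuousAt.mul continuousAt_const
      (continuousAt_inv₀ one_ne_zero)) (gAux_cont k).continuousAt

lemma qAux_one (k : ℕ) (hk : 3 ≤ k) :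
    qAux k 1 = -(2 * (k : ℝ) - 1) / 2 := by
  unfold qAux
  rw [gAux_one k hk]
  have e1 : k.factorial = k * ((k - 1) * (k - 2).factorial) := by
    conv_lhs => rw [show k = (k - 2) + 1 + 1 by omega]
    rw [Nat.factorial_succ, Nat.factorial_succ]
    congr 2 <;> omega
  have hkpos : (0:ℝ) < (k:ℝ) := by positivity
  have hfpos : (0:ℝ) < ((k - 2).factorial : ℝ) := by positivity
  rw [e1]
  push_cast
  field_simp
  simp only [one_pow, Finset.sum_const, Finset.card_range, nsmul_eq_mul, mul_one]
  rw [Nat.cast_sub (by omega : 1 ≤ k), Nat.cast_one]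
  ring

lemma Acoef_contAt (k : ℕ) : ContinuousAt (Acoef k) 1 := by
  unfold Acoef
  refine ContinuousAt.neg (ContinuousAt.add (by fun_prop) ?_)
  exact ContinuousAt.mul (ContinuousAt.mul continuousAt_const
    (continuousAt_inv₀ one_ne_zero)) (fAux_cont k).continuousAt

lemma Acoef_one (k : ℕ) : Acoef k 1 = 0 := by
  unfold Acoef
  rw [fAux_one]
  norm_num

lemma Bcoef_contAt (k : ℕ) : ContinuousAt (Bcoef k) 1 := by
  unfold Bcoef
  refine ContinuousAt.neg (ContinuousAt.add (by fun_prop) ?_)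
  refine ContinuousAt.mul (ContinuousAt.mul continuousAt_const
    (ContinuousAt.inv₀ (by fun_prop) (by norm_num))) (fAux_cont k).continuousAt

lemma Bcoef_one (k : ℕ) : Bcoef k 1 = -1 := by
  unfold Bcoef
  rw [fAux_one]
  norm_num

/-- Strong-alignment asymptotics of the escape-time prefactor for a pure
Hermite activation of degree `k ≥ 3`: `(μ² − 1)²·τ(μ) → 4/(2k − 1)²` as
`μ → 1⁻`. -/
theorem stmt4 (k : ℕ) (hk : 3 ≤ k)
    (hA : ∀ᶠ μ in nhdsWithin 1 (Set.Iio 1), Acoef k μ ≠ 0) :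
    Filter.Tendsto (fun μ : ℝ => (μ ^ 2 - 1) ^ 2 * tauCoef k μ)
      (nhdsWithin 1 (Set.Iio 1)) (nhds (4 / (2 * (k : ℝ) - 1) ^ 2)) := by
  have hq1 : qAux k 1 = -(2 * (k : ℝ) - 1) / 2 := qAux_one k hk
  have hk1 : (2 * (k : ℝ) - 1) ≠ 0 := by
    have : (3:ℝ) ≤ (k:ℝ) := by exact_mod_cast hk
    nlinarith
  -- the target function eventually equals G
  set G : ℝ → ℝ := fun μ =>
    (-(Bcoef k μ) + Real.sqrt ((Bcoef k μ) ^ 2 + 4 * (Acoef k μ) ^ 2)) /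
      (2 * (qAux k μ) ^ 2) with hG
  have hmem : Set.Ioo (0:ℝ) 1 ∈ nhdsWithin 1 (Set.Iio 1) := by
    have h1 : Set.Ioi (0:ℝ) ∈ nhdsWithin 1 (Set.Iio 1) :=
      nhdsWithin_le_nhds (Ioi_mem_nhds one_pos)
    have h2 : Set.Iio (1:ℝ) ∈ nhdsWithin 1 (Set.Iio 1) := self_mem_nhdsWithin
    have h3 := Filter.inter_mem h1 h2
    rwa [Set.Ioi_inter_Iio] at h3
  have heq : ∀ᶠ μ in nhdsWithin 1 (Set.Iio 1),
      (μ ^ 2 - 1) ^ 2 * tauCoef k μ = G μ := by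
    filter_upwards [hmem] with μ hμ
    obtain ⟨h0, h1⟩ := hμ
    have hne : μ ^ 2 - 1 ≠ 0 := by nlinarith
    have hp1 : μ + 1 ≠ 0 := by linarith
    have hAeq := Acoef_factor k μ hp1
    rw [hG]
    simp only [tauCoef, hAeq]
    rw [mul_pow, mul_div_assoc']
    rw [show 2 * ((μ ^ 2 - 1) ^ 2 * qAux k μ ^ 2)
        = (μ ^ 2 - 1) ^ 2 * (2 * qAux k μ ^ 2) by ring]
    rw [mul_div_mul_left _ _ (pow_ne_zero 2 hne)]
  refine Filter.Tendsto.congr' (Filter.EventuallyEq.symm heq) ?_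
  -- limits of the pieces
  have hAt : Filter.Tendsto (Acoef k) (nhdsWithin 1 (Set.Iio 1)) (nhds 0) := by
    have := (Acoef_contAt k).tendsto
    rw [Acoef_one] at this
    exact this.mono_left nhdsWithin_le_nhds
  have hBt : Filter.Tendsto (Bcoef k) (nhdsWithin 1 (Set.Iio 1)) (nhds (-1)) := by
    have := (Bcoef_contAt k).tendsto
    rw [Bcoef_one] at this
    exact this.mono_left nhdsWithin_le_nhds
  have hqt : Filter.Tendsto (qAux k) (nhdsWithin 1 (Set.Iio 1))
      (nhds (-(2 * (k : ℝ) - 1) / 2)) := by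
    have := (qAux_contAt k).tendsto
    rw [hq1] at this
    exact this.mono_left nhdsWithin_le_nhds
  have hnum : Filter.Tendsto
      (fun μ => -(Bcoef k μ) + Real.sqrt ((Bcoef k μ) ^ 2 + 4 * (Acoef k μ) ^ 2))
      (nhdsWithin 1 (Set.Iio 1)) (nhds 2) := by
    have h1 : Filter.Tendsto (fun μ => (Bcoef k μ) ^ 2 + 4 * (Acoef k μ) ^ 2)
        (nhdsWithin 1 (Set.Iio 1)) (nhds 1) := by
      have := ((hBt.pow 2).add ((hAt.pow 2).const_mul 4))
      norm_num at this
      exact this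
    have h2 := (Real.continuous_sqrt.continuousAt (x := (1:ℝ))).tendsto.comp h1
    rw [Real.sqrt_one] at h2
    have h3 := hBt.neg.add h2
    norm_num at h3
    simpa [Function.comp] using h3
  have hden : Filter.Tendsto (fun μ => 2 * (qAux k μ) ^ 2)
      (nhdsWithin 1 (Set.Iio 1)) (nhds (2 * (-(2 * (k : ℝ) - 1) / 2) ^ 2)) :=
    (hqt.pow 2).const_mul 2
  have hq0 : -(2 * (k : ℝ) - 1) / 2 ≠ 0 :=
    div_ne_zero (neg_ne_zero.mpr hk1) two_ne_zero
  have hdne : 2 * (-(2 * (k : ℝ) - 1) / 2) ^ 2 ≠ 0 := by positivity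
  have hval : (2:ℝ) / (2 * (-(2 * (k : ℝ) - 1) / 2) ^ 2)
      = 4 / (2 * (k : ℝ) - 1) ^ 2 := by
    rw [div_eq_div_iff (by positivity) (by positivity)]
    ring
  have h4 := hnum.div hden hdne
  rw [hval] at h4
  exact h4
end

section
/- Let k⋆, k ∈ ℕ with k ≤ k⋆ − 2 and k ≡ k⋆ (mod 2), and let r > 0. Then r^{(k+1)/2} · ∫ z · He_k(z) · He_{k⋆}′(√r · z) dγ(z) = k⋆! · r^k · ((r − 1)/2)^{(k⋆ − k − 2)/2} / ((k⋆ − k − 2)/2)! · (k⋆·r − k)/(k⋆ − k), where He_{k⋆}′ denotes the derivative of the polynomial He_{k⋆}. Moreover, for k = k⋆ one has r^{(k⋆+1)/2} · ∫ z · He_{k⋆}(z) · He_{k⋆}′(√r · z) dγ(z) = k⋆ · k⋆! · r^{k⋆}. -/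
open MeasureTheory ProbabilityTheory Polynomial Real
open scoped NNReal ENNReal

/-- The `n`-th probabilists' Hermite polynomial, as a real function. -/
noncomputable def He (n : ℕ) (x : ℝ) : ℝ :=
  Polynomial.aeval x (Polynomial.hermite n)

noncomputable def gg (x : ℝ) : ℝ := Real.exp (-(x^2/2))

lemma integrable_pow_gg (n : ℕ) : Integrable (fun x : ℝ => x ^ n * gg x) := by
  have h := integrable_rpow_mul_exp_neg_mul_sq (b := 1/2) (by norm_num) (s := (n:ℝ))
    (by have : (0:ℝ) ≤ n := Nat.cast_nonneg n; linarith)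
  simp_rw [Real.rpow_natCast] at h
  convert h using 2 with x
  unfold gg
  ring_nf

lemma integrable_poly_gg (p : ℝ[X]) : Integrable (fun x : ℝ => p.eval x * gg x) := by
  have : (fun x : ℝ => p.eval x * gg x)
      = fun x => ∑ i ∈ Finset.range (p.natDegree + 1), p.coeff i * (x ^ i * gg x) := by
    funext x
    rw [Polynomial.eval_eq_sum_range, Finset.sum_mul]
    simp [mul_assoc]
  rw [this]
  exact integrable_finset_sum _ fun i _ => (integrable_pow_gg i).const_mul _

noncomputable def LL (p : ℝ[X]) : ℝ := ∫ x : ℝ, p.eval x * gg x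

lemma LL_add (p q : ℝ[X]) : LL (p + q) = LL p + LL q := by
  unfold LL
  simp_rw [Polynomial.eval_add, add_mul]
  exact integral_add (integrable_poly_gg p) (integrable_poly_gg q)

lemma LL_Cmul (c : ℝ) (p : ℝ[X]) : LL (C c * p) = c * LL p := by
  unfold LL
  simp_rw [Polynomial.eval_mul, Polynomial.eval_C, mul_assoc]
  exact integral_const_mul c _

lemma LL_one : LL 1 = Real.sqrt (2 * Real.pi) := by
  unfold LL gg
  simp only [Polynomial.eval_one, one_mul]
  have h := integral_gaussian (1/2 : ℝ)
  have : ∀ x : ℝ, Real.exp (-(x^2/2)) = Real.exp (-(1/2 : ℝ) * x ^ 2) := by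
    intro x; ring_nf
  simp_rw [this]
  rw [h]
  norm_num
  rw [mul_comm]

lemma hasDerivAt_gg (x : ℝ) : HasDerivAt gg (-x * gg x) x := by
  unfold gg
  have h1 : HasDerivAt (fun y : ℝ => -(y^2/2)) (-x) x := by
    have := (hasDerivAt_pow 2 x).div_const 2
    have : HasDerivAt (fun y : ℝ => -(y^2/2)) _ x := this.neg
    convert this using 1
    ring
  simpa [mul_comm] using h1.exp

lemma stein (p : ℝ[X]) : LL (X * p) = LL (derivative p) := by
  have hD : ∀ x : ℝ, HasDerivAt (fun y => p.eval y * gg y)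
      ((derivative p - X * p).eval x * gg x) x := by
    intro x
    have : HasDerivAt (fun y => p.eval y * gg y) _ x := (p.hasDerivAt x).mul (hasDerivAt_gg x)
    convert this using 1
    simp [Polynomial.eval_sub, Polynomial.eval_mul]
    ring
  have h0 := integral_eq_zero_of_hasDerivAt_of_integrable hD
    (integrable_poly_gg (derivative p - X * p)) (integrable_poly_gg p)
  have : LL (derivative p - X * p) = 0 := h0
  have hsub : LL (derivative p - X * p) = LL (derivative p) - LL (X * p) := by
    unfold LL
    simp_rw [Polynomial.eval_sub, sub_mul]
    exact integral_sub (integrable_poly_gg _) (integrable_poly_gg _)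
  rw [hsub] at this
  linarith

noncomputable def hR (n : ℕ) : ℝ[X] := (Polynomial.hermite n).map (Int.castRingHom ℝ)

lemma hR_zero : hR 0 = 1 := by simp [hR, Polynomial.hermite_zero]

lemma hR_one : hR 1 = X := by simp [hR, Polynomial.hermite_one]

lemma hR_succ (n : ℕ) : hR (n + 1) = X * hR n - derivative (hR n) := by
  unfold hR
  rw [Polynomial.hermite_succ, Polynomial.map_sub, Polynomial.map_mul, Polynomial.map_X,
    Polynomial.derivative_map]

lemma derivative_hR_succ (n : ℕ) : derivative (hR (n + 1)) = C ((n : ℝ) + 1) * hR n := by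
  induction n with
  | zero => simp [hR_one, hR_zero]
  | succ n ih =>
    rw [hR_succ (n+1), derivative_sub, derivative_mul, derivative_X, ih, hR_succ n,
      derivative_mul]
    push_cast
    have hC : C ((n:ℝ) + 1 + 1) = C ((n:ℝ) + 1) + C 1 := by rw [← C_add]
    rw [hC, C_1]
    simp only [derivative_C, zero_mul, zero_add]
    ring

lemma derivative_hR (n : ℕ) : derivative (hR n) = C (n : ℝ) * hR (n - 1) := by
  cases n with
  | zero => simp [hR_zero]
  | succ n => rw [derivative_hR_succ]; push_cast; simp

lemma He_eq_eval (n : ℕ) (x : ℝ) : He n x = (hR n).eval x := by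
  unfold He hR
  rw [Polynomial.aeval_def, Polynomial.eval_map]
  rfl

lemma LL_zero : LL 0 = 0 := by unfold LL; simp

lemma LL_sub (p q : ℝ[X]) : LL (p - q) = LL p - LL q := by
  unfold LL
  simp_rw [Polynomial.eval_sub, sub_mul]
  exact integral_sub (integrable_poly_gg p) (integrable_poly_gg q)

noncomputable def FF (s : ℝ) (a b : ℕ) : ℝ := LL (hR a * (hR b).comp (C s * X))

noncomputable def GG (s : ℝ) (b : ℕ) : ℝ := LL ((hR b).comp (C s * X))

lemma GG_zero (s : ℝ) : GG s 0 = Real.sqrt (2 * Real.pi) := by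
  unfold GG; rw [hR_zero, Polynomial.one_comp, LL_one]

lemma FF_zero_left (s : ℝ) (b : ℕ) : FF s 0 b = GG s b := by
  unfold FF GG; rw [hR_zero, one_mul]

lemma keyF (s : ℝ) (a b : ℕ) :
    FF s (a + 1) b = s * LL (hR a * ((derivative (hR b)).comp (C s * X))) := by
  have hstein := stein (hR a * (hR b).comp (C s * X))
  have hL : X * (hR a * (hR b).comp (C s * X))
      = hR (a+1) * (hR b).comp (C s * X) + derivative (hR a) * (hR b).comp (C s * X) := by
    rw [hR_succ]; ring
  have hR' : derivative (hR a * (hR b).comp (C s * X))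
      = derivative (hR a) * (hR b).comp (C s * X)
        + C s * (hR a * ((derivative (hR b)).comp (C s * X))) := by
    rw [derivative_mul, Polynomial.derivative_comp]
    simp only [derivative_mul, derivative_C, derivative_X, zero_mul, mul_one, zero_add]
    ring
  rw [hL, hR'] at hstein
  rw [LL_add, LL_add, LL_Cmul] at hstein
  unfold FF
  linarith

lemma FF_succ_succ (s : ℝ) (a b : ℕ) :
    FF s (a + 1) (b + 1) = s * ((b : ℝ) + 1) * FF s a b := by
  rw [keyF, derivative_hR_succ, Polynomial.mul_comp, Polynomial.C_comp]
  have : hR a * (C ((b:ℝ)+1) * (hR b).comp (C s * X))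
      = C ((b:ℝ)+1) * (hR a * (hR b).comp (C s * X)) := by ring
  rw [this, LL_Cmul]
  unfold FF
  ring

lemma FF_succ_zero (s : ℝ) (a : ℕ) : FF s (a + 1) 0 = 0 := by
  rw [keyF, hR_zero]
  simp [LL_zero]

lemma keyG (s : ℝ) (m : ℕ) :
    GG s (m + 1) = (s^2 - 1) * LL ((derivative (hR m)).comp (C s * X)) := by
  unfold GG
  rw [hR_succ, Polynomial.sub_comp, Polynomial.mul_comp, Polynomial.X_comp, LL_sub]
  have h1 : (C s * X) * (hR m).comp (C s * X) = C s * (X * (hR m).comp (C s * X)) := by ring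
  rw [h1, LL_Cmul, stein, Polynomial.derivative_comp]
  simp only [derivative_mul, derivative_C, derivative_X, zero_mul, mul_one, zero_add]
  rw [LL_Cmul]
  ring

lemma GG_one (s : ℝ) : GG s 1 = 0 := by
  have := keyG s 0
  rw [hR_zero] at this
  simpa [LL_zero] using this

lemma GG_succ_succ (s : ℝ) (m : ℕ) :
    GG s (m + 2) = (s^2 - 1) * ((m : ℝ) + 1) * GG s m := by
  rw [keyG, derivative_hR_succ, Polynomial.mul_comp, Polynomial.C_comp, LL_Cmul]
  unfold GG
  ring

/-- odd double factorial: `odf m = (2m-1)!! = 1·3·5⋯(2m-1)` -/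
def odf : ℕ → ℕ
  | 0 => 1
  | m + 1 => (2 * m + 1) * odf m

lemma GG_even (s : ℝ) (m : ℕ) :
    GG s (2 * m) = (s^2 - 1)^m * (odf m : ℝ) * Real.sqrt (2 * Real.pi) := by
  induction m with
  | zero => simp [GG_zero, odf]
  | succ m ih =>
    have h2 : 2 * (m + 1) = 2 * m + 2 := by ring
    rw [h2, GG_succ_succ, ih]
    have : (odf (m+1) : ℝ) = (2 * (m:ℝ) + 1) * odf m := by
      rw [odf]; push_cast; ring
    rw [this]
    push_cast
    ring

lemma GG_odd (s : ℝ) (m : ℕ) : GG s (2 * m + 1) = 0 := by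
  induction m with
  | zero => exact GG_one s
  | succ m ih =>
    have h2 : 2 * (m + 1) + 1 = (2 * m + 1) + 2 := by ring
    rw [h2, GG_succ_succ, ih, mul_zero]

lemma FF_eq (s : ℝ) (a b : ℕ) :
    FF s a (a + b) = s^a * ((a + b).descFactorial a : ℝ) * GG s b := by
  induction a with
  | zero => simp [FF_zero_left]
  | succ a ih =>
    have h1 : a + 1 + b = (a + b) + 1 := by ring
    rw [h1, FF_succ_succ, ih]
    rw [Nat.succ_descFactorial_succ]
    push_cast
    ring

lemma FF_gt (s : ℝ) (b : ℕ) : FF s (b + 2) b = 0 := by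
  induction b with
  | zero => exact FF_succ_zero s 1
  | succ b ih =>
    have h1 : b + 1 + 2 = (b + 2) + 1 := by ring
    rw [h1, FF_succ_succ, ih, mul_zero]

lemma integral_poly_gaussianReal (p : ℝ[X]) :
    ∫ z, p.eval z ∂(gaussianReal 0 1) = (Real.sqrt (2 * Real.pi))⁻¹ * LL p := by
  rw [gaussianReal_of_var_ne_zero 0 one_ne_zero]
  have hd : (gaussianPDF 0 1) = fun x => ((Real.toNNReal (gaussianPDFReal 0 1 x) : ℝ≥0) : ℝ≥0∞) := by
    funext x
    rw [gaussianPDF]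
    rfl
  rw [hd, integral_withDensity_eq_integral_smul
    ((measurable_gaussianPDFReal 0 1).real_toNNReal) (fun x => p.eval x)]
  unfold LL
  rw [← integral_const_mul]
  congr 1
  funext x
  have hnn : 0 ≤ gaussianPDFReal 0 1 x := gaussianPDFReal_nonneg 0 1 x
  rw [NNReal.smul_def, smul_eq_mul, Real.coe_toNNReal _ hnn]
  rw [gaussianPDFReal]
  unfold gg
  push_cast
  rw [mul_one, sub_zero]
  ring_nf

lemma deriv_He (n : ℕ) (y : ℝ) : deriv (He n) y = (derivative (hR n)).eval y := by
  have h : He n = fun x => (hR n).eval x := funext (He_eq_eval n)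
  rw [h, Polynomial.deriv]

lemma main_core (kk ks : ℕ) (r : ℝ) :
    ∫ z, z * He kk z * deriv (He ks) (Real.sqrt r * z) ∂(gaussianReal 0 1)
      = (Real.sqrt (2 * Real.pi))⁻¹ *
        LL (X * hR kk * ((derivative (hR ks)).comp (C (Real.sqrt r) * X))) := by
  rw [← integral_poly_gaussianReal]
  congr 1
  funext z
  rw [Polynomial.eval_mul, Polynomial.eval_mul, Polynomial.eval_X, Polynomial.eval_comp,
    Polynomial.eval_mul, Polynomial.eval_C, Polynomial.eval_X, He_eq_eval, deriv_He]

lemma LL_main (s : ℝ) (kk b : ℕ) :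
    LL (X * hR kk * (hR b).comp (C s * X))
      = FF s (kk + 1) b + (kk : ℝ) * FF s (kk - 1) b := by
  have hX : X * hR kk = hR (kk + 1) + C (kk : ℝ) * hR (kk - 1) := by
    rw [hR_succ, ← derivative_hR]; ring
  rw [hX, add_mul]
  rw [LL_add]
  have : C (kk:ℝ) * hR (kk-1) * (hR b).comp (C s * X)
      = C (kk:ℝ) * (hR (kk-1) * (hR b).comp (C s * X)) := by ring
  rw [this, LL_Cmul]
  rfl

lemma desc_mul_factorial (a b : ℕ) :
    ((a + b).descFactorial a) * b.factorial = (a + b).factorial := by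
  induction a with
  | zero => simp
  | succ a ih =>
    have h1 : a + 1 + b = (a + b) + 1 := by ring
    rw [h1, Nat.succ_descFactorial_succ]
    rw [Nat.factorial_succ]
    calc (a + b + 1) * (a+b).descFactorial a * b.factorial
        = (a + b + 1) * ((a+b).descFactorial a * b.factorial) := by ring
      _ = (a + b + 1) * (a + b).factorial := by rw [ih]

lemma odf_factorial (m : ℕ) : (odf m) * 2^m * m.factorial = (2*m).factorial := by
  induction m with
  | zero => simp [odf]
  | succ m ih =>
    have h2 : 2 * (m+1) = (2*m + 1) + 1 := by ring
    rw [h2, Nat.factorial_succ, Nat.factorial_succ, odf]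
    calc (2*m+1) * odf m * 2^(m+1) * ((m+1) * m.factorial)
        = (2*m+1+1) * ((2*m+1) * (odf m * 2^m * m.factorial)) := by ring
      _ = (2*m+1+1) * ((2*m+1) * (2*m).factorial) := by rw [ih]

lemma hrpow (r : ℝ) (hr : 0 < r) (n : ℕ) :
    r ^ (((n : ℝ) + 1) / 2) = (Real.sqrt r) ^ (n + 1) := by
  rw [Real.sqrt_eq_rpow]
  rw [← Real.rpow_natCast (r ^ ((1:ℝ)/2)) (n+1), ← Real.rpow_mul hr.le]
  congr 1
  push_cast
  ring

lemma LL_reduce (kk ks : ℕ) (r : ℝ) :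
    ∫ z, z * He kk z * deriv (He ks) (Real.sqrt r * z) ∂(gaussianReal 0 1)
      = (Real.sqrt (2 * Real.pi))⁻¹ * ((ks : ℝ) *
          (FF (Real.sqrt r) (kk + 1) (ks - 1)
            + (kk : ℝ) * FF (Real.sqrt r) (kk - 1) (ks - 1))) := by
  rw [main_core, derivative_hR, Polynomial.mul_comp, Polynomial.C_comp]
  have h1 : X * hR kk * (C (ks:ℝ) * (hR (ks-1)).comp (C (Real.sqrt r) * X))
      = C (ks:ℝ) * (X * hR kk * (hR (ks-1)).comp (C (Real.sqrt r) * X)) := by ring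
  rw [h1, LL_Cmul, LL_main]

lemma part2 (kstar : ℕ) (hks : 2 ≤ kstar) (r : ℝ) (hr : 0 < r) :
    r ^ (((kstar : ℝ) + 1) / 2) *
        ∫ z, z * He kstar z * deriv (He kstar) (Real.sqrt r * z)
          ∂(gaussianReal 0 1)
      = (kstar : ℝ) * (kstar.factorial : ℝ) * r ^ kstar := by
  obtain ⟨b, hb⟩ : ∃ b, kstar = b + 1 := ⟨kstar - 1, by omega⟩
  set s := Real.sqrt r with hs
  have hs2 : s ^ 2 = r := Real.sq_sqrt hr.le
  have hsplit : Real.sqrt (2 * Real.pi) = Real.sqrt 2 * Real.sqrt Real.pi :=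
    Real.sqrt_mul (by norm_num) _
  have hc2 : Real.sqrt 2 ≠ 0 := by positivity
  have hcpi : Real.sqrt Real.pi ≠ 0 := by
    have := Real.pi_pos; positivity
  rw [LL_reduce, hrpow r hr, hsplit]
  have e1 : kstar - 1 = b := by omega
  have e2 : kstar + 1 = b + 2 := by omega
  rw [e1, e2]
  have hF1 : FF s (b + 2) b = 0 := FF_gt s b
  have hF2 : FF s b b = s ^ b * (b.factorial : ℝ) * (Real.sqrt 2 * Real.sqrt Real.pi) := by
    have := FF_eq s b 0
    rw [Nat.add_zero, GG_zero, Nat.descFactorial_self] at this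
    simpa using this
  rw [hF1, hF2, hb]
  have hfac : ((b+1).factorial : ℝ) = ((b:ℝ) + 1) * (b.factorial : ℝ) := by
    rw [Nat.factorial_succ]; push_cast; ring
  rw [hfac]
  rw [← hs2]
  push_cast
  rw [Real.sqrt_sq (show 0 ≤ s from Real.sqrt_nonneg r)]
  field_simp
  ring

lemma part1 (kstar k m : ℕ) (hm : kstar = k + 2 + 2 * m) (r : ℝ) (hr : 0 < r) :
    r ^ (((k : ℝ) + 1) / 2) *
        ∫ z, z * He k z * deriv (He kstar) (Real.sqrt r * z) ∂(gaussianReal 0 1)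
      = (kstar.factorial : ℝ) * r ^ k * ((r - 1) / 2) ^ m / (m.factorial : ℝ) *
          (((kstar : ℝ) * r - (k : ℝ)) / ((kstar : ℝ) - (k : ℝ))) := by
  obtain ⟨s, hs0, rfl⟩ : ∃ s, 0 < s ∧ s ^ 2 = r :=
    ⟨Real.sqrt r, Real.sqrt_pos.mpr hr, Real.sq_sqrt hr.le⟩
  have hss : Real.sqrt (s ^ 2) = s := Real.sqrt_sq hs0.le
  have hrp : (s ^ 2 : ℝ) ^ (((k : ℝ) + 1) / 2) = s ^ (k + 1) := by
    rw [hrpow _ hr, hss]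
  have hsplit : Real.sqrt (2 * Real.pi) = Real.sqrt 2 * Real.sqrt Real.pi :=
    Real.sqrt_mul (by norm_num) _
  have h2ne : Real.sqrt 2 ≠ 0 := by positivity
  have hpine : Real.sqrt Real.pi ≠ 0 := by have := Real.pi_pos; positivity
  have hmfac : (m.factorial : ℝ) ≠ 0 := Nat.cast_ne_zero.mpr m.factorial_ne_zero
  have h2m2 : (2 * (m : ℝ) + 2) ≠ 0 := by positivity
  have h2m1 : (2 * (m : ℝ) + 1) ≠ 0 := by positivity
  have h2pm : ((2 : ℝ) ^ m) ≠ 0 := by positivity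
  rw [LL_reduce, hss, hrp, hsplit]
  have hKk : (kstar : ℝ) - (k : ℝ) = 2 * (m : ℝ) + 2 := by rw [hm]; push_cast; ring
  have hKc : (kstar : ℝ) = (k : ℝ) + 2 + 2 * m := by rw [hm]; push_cast; ring
  rw [hKk]
  have e1 : kstar - 1 = k + 1 + 2 * m := by omega
  rw [e1]
  have hF1 : FF s (k + 1) (k + 1 + 2 * m)
      = s ^ (k + 1) * (((k + 1 + 2 * m).descFactorial (k + 1)) : ℝ) *
        ((s ^ 2 - 1) ^ m * (odf m : ℝ) * (Real.sqrt 2 * Real.sqrt Real.pi)) := by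
    have h := FF_eq s (k + 1) (2 * m)
    rw [GG_even, hsplit] at h
    exact h
  rw [hF1]
  have E1 : (kstar.factorial : ℝ)
      = (kstar : ℝ) * (((k + 1 + 2 * m).descFactorial (k + 1)) : ℝ) * (odf m : ℝ) *
        2 ^ m * (m.factorial : ℝ) := by
    have n3 : kstar.factorial = kstar * (k + 1 + 2 * m).factorial := by
      have : kstar = (k + 1 + 2 * m) + 1 := by omega
      rw [this, Nat.factorial_succ, ← this]
    have c0 : (kstar.factorial : ℝ) = (kstar : ℝ) * ((k + 1 + 2 * m).factorial : ℝ) := by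
      exact_mod_cast congrArg (Nat.cast : ℕ → ℝ) n3
    have c1 : ((k + 1 + 2 * m).factorial : ℝ)
        = (((k + 1 + 2 * m).descFactorial (k + 1)) : ℝ) * ((2 * m).factorial : ℝ) := by
      exact_mod_cast congrArg (Nat.cast : ℕ → ℝ) (desc_mul_factorial (k + 1) (2 * m)).symm
    have c2 : ((2 * m).factorial : ℝ) = (odf m : ℝ) * 2 ^ m * (m.factorial : ℝ) := by
      exact_mod_cast congrArg (Nat.cast : ℕ → ℝ) (odf_factorial m).symm
    rw [c0, c1, c2]; ring
  rw [E1]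
  cases k with
  | zero =>
    simp only [Nat.cast_zero, zero_mul, add_zero, Nat.cast_ofNat, pow_zero]
    rw [hKc] at *
    push_cast at *
    rw [div_pow]
    field_simp
    ring
  | succ k' =>
    rw [show k' + 1 - 1 = k' from rfl]
    have e3 : k' + 1 + 1 + 2 * m = k' + (2 * m + 2) := by omega
    rw [e3]
    have hgg : GG s (2 * m + 2)
        = (s ^ 2 - 1) ^ (m + 1) * (odf (m + 1) : ℝ) * (Real.sqrt 2 * Real.sqrt Real.pi) := by
      have h := GG_even s (m + 1)
      rw [hsplit, show 2 * (m + 1) = 2 * m + 2 from by ring] at h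
      exact h
    have hFF2 : FF s k' (k' + (2 * m + 2))
        = s ^ k' * (((k' + (2 * m + 2)).descFactorial k') : ℝ) *
          ((s ^ 2 - 1) ^ (m + 1) * (odf (m + 1) : ℝ) * (Real.sqrt 2 * Real.sqrt Real.pi)) := by
      have h := FF_eq s k' (2 * m + 2)
      rw [hgg] at h
      exact h
    rw [hFF2]
    have hodf : (odf (m + 1) : ℝ) = (2 * (m : ℝ) + 1) * (odf m : ℝ) := by
      rw [odf]; push_cast; ring
    rw [hodf]
    -- descFactorial relation
    have n1 := desc_mul_factorial (k' + 2) (2 * m)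
    have n2 := desc_mul_factorial k' (2 * m + 2)
    have i1 : k' + 2 + 2 * m = k' + (2 * m + 2) := by omega
    rw [i1] at n1
    have i2 : k' + 2 = k' + 1 + 1 := by omega
    rw [i2] at n1
    have n3 : (2 * m + 2).factorial = (2 * m + 2) * ((2 * m + 1) * (2 * m).factorial) := by
      rw [show 2 * m + 2 = (2 * m + 1) + 1 from by omega, Nat.factorial_succ, Nat.factorial_succ]
    rw [n3] at n2
    -- cast to ℝ
    have r1 : (((k' + (2 * m + 2)).descFactorial (k' + 1 + 1)) : ℝ) * ((2 * m).factorial : ℝ)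
        = ((k' + (2 * m + 2)).factorial : ℝ) := by
      exact_mod_cast congrArg (Nat.cast : ℕ → ℝ) n1
    have r2 : (((k' + (2 * m + 2)).descFactorial k') : ℝ) *
          ((2 * (m : ℝ) + 2) * ((2 * (m : ℝ) + 1) * ((2 * m).factorial : ℝ)))
        = ((k' + (2 * m + 2)).factorial : ℝ) := by
      exact_mod_cast congrArg (Nat.cast : ℕ → ℝ) n2
    have hfne : ((2 * m).factorial : ℝ) ≠ 0 := Nat.cast_ne_zero.mpr (2 * m).factorial_ne_zero
    have hD2 : (((k' + (2 * m + 2)).descFactorial k') : ℝ)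
        = (((k' + (2 * m + 2)).descFactorial (k' + 1 + 1)) : ℝ) /
          ((2 * (m : ℝ) + 1) * (2 * (m : ℝ) + 2)) := by
      rw [eq_div_iff (by positivity)]
      apply mul_right_cancel₀ hfne
      linear_combination r2 - r1
    rw [hD2]
    rw [hKc]
    push_cast
    rw [div_pow]
    field_simp
    ring

/-- The coefficients `σ̄_k^{[r]} = r^{(k+1)/2}·E[z·He_k(z)·He_{k⋆}′(√r·z)]` for
a pure Hermite activation `He_{k⋆}`: for `k ≤ k⋆ − 2` of the same parity as
`k⋆`, it equals
`k⋆!·r^k·((r−1)/2)^{(k⋆−k−2)/2}/((k⋆−k−2)/2)!·(k⋆r − k)/(k⋆ − k)`,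
and for `k = k⋆` it equals `k⋆·k⋆!·r^{k⋆}`. -/
theorem stmt15 (kstar k : ℕ) (hk : k + 2 ≤ kstar) (hpar : k % 2 = kstar % 2)
    (r : ℝ) (hr : 0 < r) :
    (r ^ (((k : ℝ) + 1) / 2) *
        ∫ z, z * He k z * deriv (He kstar) (Real.sqrt r * z) ∂(gaussianReal 0 1)
      = (kstar.factorial : ℝ) * r ^ k *
          ((r - 1) / 2) ^ ((kstar - k - 2) / 2) /
          (((kstar - k - 2) / 2).factorial : ℝ) *
          (((kstar : ℝ) * r - (k : ℝ)) / ((kstar : ℝ) - (k : ℝ)))) ∧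
    (r ^ (((kstar : ℝ) + 1) / 2) *
        ∫ z, z * He kstar z * deriv (He kstar) (Real.sqrt r * z)
          ∂(gaussianReal 0 1)
      = (kstar : ℝ) * (kstar.factorial : ℝ) * r ^ kstar) := by
  obtain ⟨m, hm⟩ : ∃ m, kstar = k + 2 + 2 * m := ⟨(kstar - k - 2) / 2, by omega⟩
  constructor
  · have e : (kstar - k - 2) / 2 = m := by omega
    rw [e]
    exact part1 kstar k m hm r hr
  · exact part2 kstar (by omega) r hr
end
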